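/- Let 𝒜 ⊆ ℝ^m be a compact set, let A : ℝ^d × 𝒜 → Sym_d(ℝ) and h : ℝ^d × 𝒜 → ℝ be continuous and ℤ^d-periodic in the first variable. Let Q ∈ Sym_d(ℝ), c ∈ ℝ, and let u : ℝ^d → ℝ be a C², ℤ^d-periodic function such that sup_{α∈𝒜} ( −A(y,α):(Q + D²u(y)) + h(y,α) ) = c for every y ∈ ℝ^d. Let ρ be a Borel probability measure on [0,1]^d × 𝒜 satisfying the invariance condition ∫ A(y,α):D²φ(y) dρ(y,α) = 0 for every C², ℤ^d-periodic φ : ℝ^d → ℝ. Then ∫ ( −A(y,α):Q + h(y,α) ) dρ(y,α) ≤ c. -/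

import Mathlib

open MeasureTheory Matrix

/-- Frobenius inner product `M:N = tr(Mᵀ N)` of two square matrices. -/
noncomputable def frob {d : ℕ} (M N : Matrix (Fin d) (Fin d) ℝ) : ℝ :=
  (Mᵀ * N).trace

/-- Hessian matrix `D²u(y)` of a function `u : ℝ^d → ℝ`. -/
noncomputable def hessian {d : ℕ} (u : (Fin d → ℝ) → ℝ) (y : Fin d → ℝ) :
    Matrix (Fin d) (Fin d) ℝ :=
  Matrix.of fun i j => fderiv ℝ (fun z => fderiv ℝ u z (Pi.single j 1)) y (Pi.single i 1)

lemma frob_add_right {d : ℕ} (M N P : Matrix (Fin d) (Fin d) ℝ) :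
    frob M (N + P) = frob M N + frob M P := by
  simp [frob, Matrix.mul_add]

lemma frob_eq_sum {d : ℕ} (M N : Matrix (Fin d) (Fin d) ℝ) :
    frob M N = ∑ j, ∑ i, M i j * N i j := by
  simp [frob, Matrix.trace, Matrix.mul_apply, Matrix.diag, Matrix.transpose_apply]

lemma continuousOn_frob {d : ℕ} {X : Type*} [TopologicalSpace X] {s : Set X}
    {f g : X → Matrix (Fin d) (Fin d) ℝ}
    (hf : ContinuousOn f s) (hg : ContinuousOn g s) :
    ContinuousOn (fun x => frob (f x) (g x)) s := by
  simp only [frob_eq_sum]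
  apply continuousOn_finset_sum
  intro j _
  apply continuousOn_finset_sum
  intro i _
  have h1 : ContinuousOn (fun a => f a i j) s := by
    have : Continuous fun M : Matrix (Fin d) (Fin d) ℝ => M i j :=
      (continuous_apply j).comp (continuous_apply i)
    exact this.comp_continuousOn hf
  have h2 : ContinuousOn (fun a => g a i j) s := by
    have : Continuous fun M : Matrix (Fin d) (Fin d) ℝ => M i j :=
      (continuous_apply j).comp (continuous_apply i)
    exact this.comp_continuousOn hg
  exact h1.mul h2

lemma hessian_continuous {d : ℕ} {u : (Fin d → ℝ) → ℝ} (hu : ContDiff ℝ 2 u) :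
    Continuous fun y => hessian u y := by
  apply continuous_matrix
  intro i j
  have hg : ContDiff ℝ 1 (fun z => fderiv ℝ u z (Pi.single j 1)) := by
    have h1 : ContDiff ℝ 1 (fderiv ℝ u) := hu.fderiv_right (by norm_num)
    exact h1.clm_apply contDiff_const
  have := (hg.continuous_fderiv one_ne_zero).clm_apply
    (continuous_const : Continuous fun _ : Fin d → ℝ => (Pi.single i 1 : Fin d → ℝ))
  simpa [hessian] using this

/-- Weak duality: the average of `L_α(Q,y) = −A(y,α):Q + h(y,α)` against any invariant
probability measure `ρ` is at most the homogenized value `c = H̄(Q)` of the cell problem. -/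
theorem stmt_0 {d m : ℕ}
    (𝓐 : Set (Fin m → ℝ)) (h𝓐 : IsCompact 𝓐)
    (A : (Fin d → ℝ) → (Fin m → ℝ) → Matrix (Fin d) (Fin d) ℝ)
    (h : (Fin d → ℝ) → (Fin m → ℝ) → ℝ)
    (hAsym : ∀ (y : Fin d → ℝ), ∀ α ∈ 𝓐, (A y α)ᵀ = A y α)
    (hAcont : ContinuousOn (fun p : (Fin d → ℝ) × (Fin m → ℝ) => A p.1 p.2)
      (Set.univ ×ˢ 𝓐))
    (hhcont : ContinuousOn (fun p : (Fin d → ℝ) × (Fin m → ℝ) => h p.1 p.2)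
      (Set.univ ×ˢ 𝓐))
    (hAper : ∀ (k : Fin d → ℤ) (y : Fin d → ℝ) (α : Fin m → ℝ),
      A (y + fun i => (k i : ℝ)) α = A y α)
    (hhper : ∀ (k : Fin d → ℤ) (y : Fin d → ℝ) (α : Fin m → ℝ),
      h (y + fun i => (k i : ℝ)) α = h y α)
    (Q : Matrix (Fin d) (Fin d) ℝ) (hQ : Qᵀ = Q) (c : ℝ)
    (u : (Fin d → ℝ) → ℝ) (hu : ContDiff ℝ 2 u)
    (huper : ∀ (k : Fin d → ℤ) (y : Fin d → ℝ), u (y + fun i => (k i : ℝ)) = u y)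
    (hcell : ∀ y : Fin d → ℝ,
      sSup ((fun α => -frob (A y α) (Q + hessian u y) + h y α) '' 𝓐) = c)
    (ρ : Measure ((Fin d → ℝ) × (Fin m → ℝ))) [IsProbabilityMeasure ρ]
    (hsupp : ρ ((Set.Icc (0 : Fin d → ℝ) 1 ×ˢ 𝓐)ᶜ) = 0)
    (hinv : ∀ φ : (Fin d → ℝ) → ℝ, ContDiff ℝ 2 φ →
      (∀ (k : Fin d → ℤ) (y : Fin d → ℝ), φ (y + fun i => (k i : ℝ)) = φ y) →
      ∫ p, frob (A p.1 p.2) (hessian φ p.1) ∂ρ = 0) :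
    ∫ p, (-frob (A p.1 p.2) Q + h p.1 p.2) ∂ρ ≤ c := by
  set K : Set ((Fin d → ℝ) × (Fin m → ℝ)) := Set.Icc (0 : Fin d → ℝ) 1 ×ˢ 𝓐 with hKdef
  have hKc : IsCompact K := isCompact_Icc.prod h𝓐
  have hKsub : K ⊆ Set.univ ×ˢ 𝓐 := Set.prod_mono (Set.subset_univ _) le_rfl
  have haeK : ∀ᵐ p ∂ρ, p ∈ K := by
    rw [ae_iff]
    exact hsupp
  have hρK : ρ.restrict K = ρ := Measure.restrict_eq_self_of_ae_mem haeK
  -- continuity facts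
  have hAK : ContinuousOn (fun p : (Fin d → ℝ) × (Fin m → ℝ) => A p.1 p.2) K :=
    hAcont.mono hKsub
  have hhK : ContinuousOn (fun p : (Fin d → ℝ) × (Fin m → ℝ) => h p.1 p.2) K :=
    hhcont.mono hKsub
  have hf1K : ContinuousOn (fun p : (Fin d → ℝ) × (Fin m → ℝ) =>
      -frob (A p.1 p.2) Q + h p.1 p.2) K :=
    ContinuousOn.add (ContinuousOn.neg (continuousOn_frob hAK continuousOn_const)) hhK
  have hf2K : ContinuousOn (fun p : (Fin d → ℝ) × (Fin m → ℝ) =>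
      frob (A p.1 p.2) (hessian u p.1)) K :=
    continuousOn_frob hAK ((hessian_continuous hu).comp continuous_fst).continuousOn
  have hInt1 : Integrable (fun p : (Fin d → ℝ) × (Fin m → ℝ) =>
      -frob (A p.1 p.2) Q + h p.1 p.2) ρ := by
    rw [← hρK]
    exact hf1K.integrableOn_compact hKc
  have hInt2 : Integrable (fun p : (Fin d → ℝ) × (Fin m → ℝ) =>
      frob (A p.1 p.2) (hessian u p.1)) ρ := by
    rw [← hρK]
    exact hf2K.integrableOn_compact hKc
  -- pointwise bound
  have hpt : ∀ᵐ p ∂ρ, (-frob (A p.1 p.2) Q + h p.1 p.2)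
      ≤ c + frob (A p.1 p.2) (hessian u p.1) := by
    filter_upwards [haeK] with p hp
    obtain ⟨hp1, hp2⟩ := hp
    have hcont𝓐 : ContinuousOn (fun α => -frob (A p.1 α) (Q + hessian u p.1) + h p.1 α) 𝓐 := by
      have hmap : Set.MapsTo (fun α : Fin m → ℝ => ((p.1, α) : (Fin d → ℝ) × (Fin m → ℝ)))
          𝓐 (Set.univ ×ˢ 𝓐) := fun α hα => ⟨Set.mem_univ _, hα⟩
      have hA' : ContinuousOn (fun α => A p.1 α) 𝓐 :=
        hAcont.comp (Continuous.continuousOn (by fun_prop)) hmap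
      have hh' : ContinuousOn (fun α => h p.1 α) 𝓐 :=
        hhcont.comp (Continuous.continuousOn (by fun_prop)) hmap
      exact ContinuousOn.add
        (ContinuousOn.neg (continuousOn_frob hA' continuousOn_const)) hh'
    have hbdd : BddAbove ((fun α => -frob (A p.1 α) (Q + hessian u p.1) + h p.1 α) '' 𝓐) :=
      (h𝓐.image_of_continuousOn hcont𝓐).bddAbove
    have hmem : -frob (A p.1 p.2) (Q + hessian u p.1) + h p.1 p.2
        ∈ (fun α => -frob (A p.1 α) (Q + hessian u p.1) + h p.1 α) '' 𝓐 :=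
      Set.mem_image_of_mem _ hp2
    have hle := le_csSup hbdd hmem
    rw [hcell p.1] at hle
    rw [frob_add_right] at hle
    linarith
  calc ∫ p, (-frob (A p.1 p.2) Q + h p.1 p.2) ∂ρ
      ≤ ∫ p, (c + frob (A p.1 p.2) (hessian u p.1)) ∂ρ :=
        integral_mono_ae hInt1 ((integrable_const c).add hInt2) hpt
    _ = c + ∫ p, frob (A p.1 p.2) (hessian u p.1) ∂ρ := by
        rw [integral_add (integrable_const c) hInt2, integral_const]
        simp
    _ = c := by rw [hinv u hu huper, add_zero]
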